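/- Let X be a compact complex manifold of complex dimension n with Hermitian metric g, and let (C^{•,•}, ∂, ∂̄) ↪ (Λ^{•,•}X, ∂, ∂̄) be a finite-dimensional sub-complex of the Dolbeault double complex that is closed under the conjugate-linear Hodge star operator ∗̄_g (i.e., ∗̄_g(C^{p,q}) ⊆ C^{n−p,n−q}). Then for every (p,q), the induced map in Bott-Chern cohomology H^{p,q}_{BC}(C^{•,•}) → H^{p,q}_{BC}(X) is injective. -/

import Mathlib

/-- The Bott-Chern Laplacian
`Δ̃^{BC} = (∂∂̄)(∂∂̄)* + (∂∂̄)*(∂∂̄) + (∂̄*∂)(∂̄*∂)* + (∂̄*∂)*(∂̄*∂) + ∂̄*∂̄ + ∂*∂`. -/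
def BCLap {V : Type*} [AddCommGroup V] [Module ℂ V]
    (d1 d2 d1s d2s : V →ₗ[ℂ] V) : V →ₗ[ℂ] V :=
  (d1 ∘ₗ d2) ∘ₗ (d2s ∘ₗ d1s) + (d2s ∘ₗ d1s) ∘ₗ (d1 ∘ₗ d2)
    + (d2s ∘ₗ d1) ∘ₗ (d1s ∘ₗ d2) + (d1s ∘ₗ d2) ∘ₗ (d2s ∘ₗ d1)
    + d2s ∘ₗ d2 + d1s ∘ₗ d1

set_option maxHeartbeats 1000000 in
/-- Proposition injCo: for a compact complex manifold `X` of complex dimension `n` with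
Hermitian metric `g` — encoded here through its Dolbeault double complex `A^{•,•} = Λ^{•,•}X`
with the `L²` inner ℂ product, the conjugate-linear Hodge star `s = ∗̄_g`, the adjoints
`∂* = −∗̄∂∗̄`, `∂̄* = −∗̄∂̄∗̄`, and the elliptic decomposition
`Λ^{•,•}X = ker Δ̃^{BC} ⊕ im Δ̃^{BC}` — any finite-dimensional sub-complex `C^{•,•}` with
`∗̄_g(C^{p,q}) ⊆ C^{n−p,n−q}` induces an injective map in Bott-Chern cohomology
`H^{p,q}_{BC}(C) → H^{p,q}_{BC}(X)`. -/
theorem stmt_15 {V : Type*} [NormedAddCommGroup V] [InnerProductSpace ℂ V] (n : ℤ)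
    (A C : ℤ → ℤ → Submodule ℂ V) (d1 d2 d1s d2s : V →ₗ[ℂ] V) (s : V → V)
    -- the double complex of forms on the compact complex `n`-manifold
    (hA1 : ∀ p q : ℤ, ∀ x ∈ A p q, d1 x ∈ A (p + 1) q)
    (hA2 : ∀ p q : ℤ, ∀ x ∈ A p q, d2 x ∈ A p (q + 1))
    (hd1d1 : d1 ∘ₗ d1 = 0) (hd2d2 : d2 ∘ₗ d2 = 0)
    (hanti : d1 ∘ₗ d2 + d2 ∘ₗ d1 = 0)
    (hbounds : ∀ p q : ℤ, (p < 0 ∨ q < 0 ∨ n < p ∨ n < q) → A p q = ⊥)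
    (horth : ∀ p q p' q' : ℤ, (p, q) ≠ (p', q') →
      ∀ x ∈ A p q, ∀ y ∈ A p' q', (inner ℂ x y : ℂ) = 0)
    -- the conjugate-linear Hodge star operator `∗̄_g`
    (hs_add : ∀ x y : V, s (x + y) = s x + s y)
    (hs_smul : ∀ (c : ℂ) (x : V), s (c • x) = (starRingEnd ℂ) c • s x)
    (hsgrad : ∀ p q : ℤ, ∀ x ∈ A p q, s x ∈ A (n - p) (n - q))
    -- the adjoints `∂* = −∗̄∂∗̄` and `∂̄* = −∗̄∂̄∗̄`
    (hadj1 : ∀ x y : V, (inner ℂ (d1 x) y : ℂ) = inner ℂ x (d1s y))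
    (hadj2 : ∀ x y : V, (inner ℂ (d2 x) y : ℂ) = inner ℂ x (d2s y))
    (hd1s : ∀ x : V, d1s x = -(s (d1 (s x))))
    (hd2s : ∀ x : V, d2s x = -(s (d2 (s x))))
    -- the elliptic decomposition `Λ^{•,•}X = ker Δ̃^{BC} ⊕ im Δ̃^{BC}` (Schweitzer)
    (hdec : IsCompl (LinearMap.ker (BCLap d1 d2 d1s d2s))
      (LinearMap.range (BCLap d1 d2 d1s d2s)))
    -- `C` is a finite-dimensional sub-complex closed under `∗̄_g`
    (hCA : ∀ p q : ℤ, C p q ≤ A p q)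
    (hC1 : ∀ p q : ℤ, ∀ x ∈ C p q, d1 x ∈ C (p + 1) q)
    (hC2 : ∀ p q : ℤ, ∀ x ∈ C p q, d2 x ∈ C p (q + 1))
    (hfin : ∀ p q : ℤ, FiniteDimensional ℂ (C p q))
    (hCs : ∀ p q : ℤ, ∀ x ∈ C p q, s x ∈ C (n - p) (n - q)) :
    -- conclusion: `H^{p,q}_{BC}(C) → H^{p,q}_{BC}(X)` is injective
    ∀ p q : ℤ, ∀ x ∈ C p q, d1 x = 0 → d2 x = 0 →
      (∃ y ∈ A (p - 1) (q - 1), x = d1 (d2 y)) →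
      ∃ y' ∈ C (p - 1) (q - 1), x = d1 (d2 y') := by

  intro p q x hx hdx1 hdx2 hex
  obtain ⟨y, hy, hxy⟩ := hex
  set L := BCLap d1 d2 d1s d2s with hLdef
  -- pointwise versions of the complex identities
  have hd1d1' : ∀ z : V, d1 (d1 z) = 0 := fun z => by
    have := LinearMap.ext_iff.mp hd1d1 z; simpa using this
  have hd2d2' : ∀ z : V, d2 (d2 z) = 0 := fun z => by
    have := LinearMap.ext_iff.mp hd2d2 z; simpa using this
  have hanti' : ∀ z : V, d2 (d1 z) = -(d1 (d2 z)) := fun z => by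
    have := LinearMap.ext_iff.mp hanti z
    simp only [LinearMap.add_apply, LinearMap.comp_apply, LinearMap.zero_apply] at this
    exact eq_neg_of_add_eq_zero_right this
  -- reverse adjoint identities
  have hadj1' : ∀ a b : V, (inner ℂ (d1s a) b : ℂ) = inner ℂ a (d1 b) := by
    intro a b
    rw [← inner_conj_symm, ← hadj1, inner_conj_symm]
  have hadj2' : ∀ a b : V, (inner ℂ (d2s a) b : ℂ) = inner ℂ a (d2 b) := by
    intro a b
    rw [← inner_conj_symm, ← hadj2, inner_conj_symm]
  -- pointwise expansion of the Bott-Chern Laplacian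
  have hLapp : ∀ z : V, L z = d1 (d2 (d2s (d1s z))) + d2s (d1s (d1 (d2 z)))
      + d2s (d1 (d1s (d2 z))) + d1s (d2 (d2s (d1 z))) + d2s (d2 z) + d1s (d1 z) := by
    intro z
    simp [hLdef, BCLap, LinearMap.add_apply, LinearMap.comp_apply]
  -- inner products against the Laplacian
  have hL_inner : ∀ a b : V, (inner ℂ (L a) b : ℂ)
      = inner ℂ (d2s (d1s a)) (d2s (d1s b)) + inner ℂ (d1 (d2 a)) (d1 (d2 b))
      + inner ℂ (d1s (d2 a)) (d1s (d2 b)) + inner ℂ (d2s (d1 a)) (d2s (d1 b))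
      + inner ℂ (d2 a) (d2 b) + inner ℂ (d1 a) (d1 b) := by
    intro a b
    rw [hLapp a, inner_add_left, inner_add_left, inner_add_left, inner_add_left,
      inner_add_left, hadj1 (d2 (d2s (d1s a))) b, hadj2 (d2s (d1s a)) (d1s b),
      hadj2' (d1s (d1 (d2 a))) b, hadj1' (d1 (d2 a)) (d2 b),
      hadj2' (d1 (d1s (d2 a))) b, hadj1 (d1s (d2 a)) (d2 b),
      hadj1' (d2 (d2s (d1 a))) b, hadj2 (d2s (d1 a)) (d1 b),
      hadj2' (d2 a) b, hadj1' (d1 a) b]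
  -- gradings of the adjoints on C
  have hd1sC : ∀ p' q' : ℤ, ∀ z ∈ C p' q', d1s z ∈ C (p' - 1) q' := by
    intro p' q' z hz
    rw [hd1s]
    have h3 := hCs _ _ _ (hC1 _ _ _ (hCs p' q' z hz))
    have e1 : n - (n - p' + 1) = p' - 1 := by ring
    have e2 : n - (n - q') = q' := by ring
    rw [e1, e2] at h3
    exact (C _ _).neg_mem h3
  have hd2sC : ∀ p' q' : ℤ, ∀ z ∈ C p' q', d2s z ∈ C p' (q' - 1) := by
    intro p' q' z hz
    rw [hd2s]
    have h3 := hCs _ _ _ (hC2 _ _ _ (hCs p' q' z hz))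
    have e1 : n - (n - p') = p' := by ring
    have e2 : n - (n - q' + 1) = q' - 1 := by ring
    rw [e1, e2] at h3
    exact (C _ _).neg_mem h3
  -- the Laplacian preserves C p q
  have hLC : ∀ z ∈ C p q, L z ∈ C p q := by
    intro z hz
    rw [hLapp]
    have ep : p - 1 + 1 = p := by ring
    have eq' : q - 1 + 1 = q := by ring
    have ep' : p + 1 - 1 = p := by ring
    have eq'' : q + 1 - 1 = q := by ring
    have t1 : d1 (d2 (d2s (d1s z))) ∈ C p q := by
      have h := hC1 _ _ _ (hC2 _ _ _ (hd2sC _ _ _ (hd1sC _ _ _ hz)))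
      rwa [eq', ep] at h
    have t2 : d2s (d1s (d1 (d2 z))) ∈ C p q := by
      have h := hd2sC _ _ _ (hd1sC _ _ _ (hC1 _ _ _ (hC2 _ _ _ hz)))
      rwa [ep', eq''] at h
    have t3 : d2s (d1 (d1s (d2 z))) ∈ C p q := by
      have h := hd2sC _ _ _ (hC1 _ _ _ (hd1sC _ _ _ (hC2 _ _ _ hz)))
      rwa [ep, eq''] at h
    have t4 : d1s (d2 (d2s (d1 z))) ∈ C p q := by
      have h := hd1sC _ _ _ (hC2 _ _ _ (hd2sC _ _ _ (hC1 _ _ _ hz)))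
      rwa [eq', ep'] at h
    have t5 : d2s (d2 z) ∈ C p q := by
      have h := hd2sC _ _ _ (hC2 _ _ _ hz)
      rwa [eq''] at h
    have t6 : d1s (d1 z) ∈ C p q := by
      have h := hd1sC _ _ _ (hC1 _ _ _ hz)
      rwa [ep'] at h
    exact add_mem (add_mem (add_mem (add_mem (add_mem t1 t2) t3) t4) t5) t6
  -- work inside the finite-dimensional space W = C p q
  haveI := hfin p q
  set T : (C p q) →ₗ[ℂ] (C p q) := L.restrict hLC with hTdef
  set K : Submodule ℂ (C p q) := LinearMap.range T with hKdef
  set x' : C p q := ⟨x, hx⟩ with hx'def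
  obtain ⟨w, hw, u, hu, hxwu⟩ := K.exists_add_mem_mem_orthogonal x'
  have hTu : ((T u : C p q) : V) = L (u : V) := rfl
  -- ⟪L u, u⟫ = 0
  have hLuu : (inner ℂ (L (u : V)) ((u : V)) : ℂ) = 0 := by
    have h0 : (inner ℂ ((T u : C p q)) u : ℂ) = 0 :=
      (K.mem_orthogonal u).mp hu (T u) ⟨u, rfl⟩
    simpa [Submodule.coe_inner, hTu] using h0
  -- hence d2s (d1s u) = 0
  have hdd : d2s (d1s (u : V)) = 0 := by
    have h1 := (hL_inner (u : V) (u : V)).symm.trans hLuu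
    rw [inner_self_eq_norm_sq_to_K, inner_self_eq_norm_sq_to_K,
      inner_self_eq_norm_sq_to_K, inner_self_eq_norm_sq_to_K,
      inner_self_eq_norm_sq_to_K, inner_self_eq_norm_sq_to_K] at h1
    have h2 : ‖d2s (d1s (u : V))‖ ^ 2 + ‖d1 (d2 (u : V))‖ ^ 2 + ‖d1s (d2 (u : V))‖ ^ 2
        + ‖d2s (d1 (u : V))‖ ^ 2 + ‖d2 (u : V)‖ ^ 2 + ‖d1 (u : V)‖ ^ 2 = 0 := by
      norm_cast at h1
      exact Complex.ofReal_eq_zero.mp h1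
    have h3 : ‖d2s (d1s (u : V))‖ ^ 2 = 0 := by
      nlinarith [sq_nonneg ‖d1 (d2 (u : V))‖, sq_nonneg ‖d1s (d2 (u : V))‖,
        sq_nonneg ‖d2s (d1 (u : V))‖, sq_nonneg ‖d2 (u : V)‖, sq_nonneg ‖d1 (u : V)‖,
        sq_nonneg ‖d2s (d1s (u : V))‖]
    simpa using (pow_eq_zero_iff (two_ne_zero)).mp h3
  -- x is orthogonal to u (using global exactness)
  have hxu : (inner ℂ x ((u : V)) : ℂ) = 0 := by
    rw [hxy, hadj1, hadj2, hdd, inner_zero_right]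
  -- hence u = 0 and x = L c for some c ∈ C p q
  have hu0 : (u : C p q) = 0 := by
    have hw0 : (inner ℂ ((w : C p q)) u : ℂ) = 0 := (K.mem_orthogonal u).mp hu w hw
    have : (inner ℂ (x' : C p q) u : ℂ) = inner ℂ (u : C p q) u := by
      rw [hxwu, inner_add_left, hw0, zero_add]
    have h4 : (inner ℂ (u : C p q) u : ℂ) = 0 := by
      rw [← this]
      simpa [Submodule.coe_inner, hx'def] using hxu
    exact inner_self_eq_zero.mp h4
  have hxw : T ⁻¹' {x'} ≠ ∅ → True := fun _ => trivial
  have hx'w : x' = w := by rw [hxwu, hu0, add_zero]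
  obtain ⟨c', hc'⟩ := hw
  have hLc : L ((c' : V)) = x := by
    have : ((T c' : C p q) : V) = ((x' : C p q) : V) := by rw [hc', hx'w]
    exact this
  -- the candidate potential in C
  set c : V := (c' : V) with hcdef
  set v : V := d2s (d1s c) with hvdef
  have hv : v ∈ C (p - 1) (q - 1) := hd2sC _ _ _ (hd1sC _ _ _ c'.2)
  set r : V := x - d1 (d2 v) with hrdef
  have hr1 : d1 r = 0 := by
    rw [hrdef, map_sub, hdx1, hd1d1' (d2 v), sub_zero]
  have hr2 : d2 r = 0 := by
    rw [hrdef, map_sub, hdx2, hanti' (d2 v), hd2d2' v, map_zero, neg_zero, sub_zero]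
  set a : V := d2 (d2s (d1 c)) + d1 c with hadef
  set b : V := d1s (d1 (d2 c)) + d1 (d1s (d2 c)) + d2 c with hbdef
  have hrab : r = d1s a + d2s b := by
    rw [hrdef, ← hLc, hLapp c, hadef, hbdef, hvdef, map_add, map_add, map_add]
    abel
  have h5 : (inner ℂ r (d1s a) : ℂ) = 0 := by rw [← hadj1, hr1, inner_zero_left]
  have h6 : (inner ℂ r (d2s b) : ℂ) = 0 := by rw [← hadj2, hr2, inner_zero_left]
  have hrr : (inner ℂ r r : ℂ) = 0 := by
    nth_rewrite 2 [hrab]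
    rw [inner_add_right, h5, h6, add_zero]
  have hr0 : r = 0 := inner_self_eq_zero.mp hrr
  refine ⟨v, hv, ?_⟩
  have := sub_eq_zero.mp (hrdef ▸ hr0)
  exact this
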